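/- Let p be a complex polynomial of degree N ≥ 1 and let σ₀ ∈ ℂ be such that the polynomial e^{−σ₀D²/2}p has N distinct roots. Then there exist r > 0 and holomorphic functions z₁, …, z_N : B(σ₀,r) → ℂ such that for every τ ∈ B(σ₀,r): the z_j(τ) are pairwise distinct and are exactly the roots of e^{−τD²/2}p; each z_j satisfies the differential equation z_j′(τ) = ∑_{k ≠ j} 1/(z_j(τ) − z_k(τ)); and consequently z_j″(τ) = −2·∑_{k ≠ j} 1/(z_j(τ) − z_k(τ))³ (the rational Calogero–Moser equations). -/

import Mathlib

open Filter Metric Set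
open Topology

noncomputable section

/-- The heat flow `e^{-τD²/2}p` of a polynomial `p`: the finite sum
`∑_k (1/k!) (-τ/2)^k p^{(2k)}`. -/
def polyHeatFlow (p : Polynomial ℂ) (τ : ℂ) : Polynomial ℂ :=
  ∑ k ∈ Finset.range (p.natDegree + 1),
    Polynomial.C ((1 / (k.factorial : ℂ)) * (-τ / 2) ^ k) * (Polynomial.derivative^[2 * k] p)


lemma heat_coeff_top (p : Polynomial ℂ) (hp : 1 ≤ p.natDegree) (τ : ℂ) :
    (polyHeatFlow p τ).coeff p.natDegree = p.coeff p.natDegree := by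
  unfold polyHeatFlow
  rw [Polynomial.finset_sum_coeff]
  rw [Finset.sum_eq_single 0]
  · simp
  · intro k hk hk0
    rw [Polynomial.coeff_C_mul, Polynomial.coeff_eq_zero_of_natDegree_lt, mul_zero]
    calc (Polynomial.derivative^[2*k] p).natDegree ≤ p.natDegree - 2*k :=
        Polynomial.natDegree_iterate_derivative p _
      _ < p.natDegree := by omega
  · intro h
    simp at h

lemma heat_natDegree_le (p : Polynomial ℂ) (τ : ℂ) :
    (polyHeatFlow p τ).natDegree ≤ p.natDegree := by
  unfold polyHeatFlow
  apply Polynomial.natDegree_sum_le_of_forall_le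
  intro k hk
  calc (Polynomial.C ((1 / (k.factorial : ℂ)) * (-τ / 2) ^ k) *
        (Polynomial.derivative^[2 * k] p)).natDegree
      ≤ (Polynomial.derivative^[2*k] p).natDegree := Polynomial.natDegree_C_mul_le _ _
    _ ≤ p.natDegree - 2*k := Polynomial.natDegree_iterate_derivative p _
    _ ≤ p.natDegree := Nat.sub_le _ _

lemma heat_natDegree (p : Polynomial ℂ) (hp : 1 ≤ p.natDegree) (τ : ℂ) :
    (polyHeatFlow p τ).natDegree = p.natDegree := by
  have hp0 : p ≠ 0 := fun h => by simp [h] at hp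
  have h1 : (polyHeatFlow p τ).coeff p.natDegree ≠ 0 := by
    rw [heat_coeff_top p hp τ, ← Polynomial.leadingCoeff]
    exact Polynomial.leadingCoeff_ne_zero.2 hp0
  exact le_antisymm (heat_natDegree_le p τ) (Polynomial.le_natDegree_of_ne_zero h1)

lemma heat_leadingCoeff (p : Polynomial ℂ) (hp : 1 ≤ p.natDegree) (τ : ℂ) :
    (polyHeatFlow p τ).leadingCoeff = p.leadingCoeff := by
  rw [Polynomial.leadingCoeff, heat_natDegree p hp τ, heat_coeff_top p hp τ]; rfl

lemma heat_ne_zero (p : Polynomial ℂ) (hp : 1 ≤ p.natDegree) (τ : ℂ) :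
    polyHeatFlow p τ ≠ 0 := by
  intro h
  have := heat_natDegree p hp τ
  rw [h] at this
  simp at this
  omega

lemma heat_deriv2 (p : Polynomial ℂ) (τ : ℂ) :
    Polynomial.derivative (Polynomial.derivative (polyHeatFlow p τ)) =
      ∑ k ∈ Finset.range (p.natDegree + 1),
        Polynomial.C ((1 / (k.factorial : ℂ)) * (-τ / 2) ^ k) *
          (Polynomial.derivative^[2 * k + 2] p) := by
  unfold polyHeatFlow
  rw [map_sum, map_sum]
  apply Finset.sum_congr rfl
  intro k _
  rw [Polynomial.derivative_C_mul, Polynomial.derivative_C_mul]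
  congr 1
  rw [← Function.iterate_succ_apply' Polynomial.derivative,
    ← Function.iterate_succ_apply' Polynomial.derivative]

lemma heat_tau_deriv_eq (p : Polynomial ℂ) (N : ℕ) (hN : 1 ≤ N) (hdeg : p.natDegree = N)
    (τ z : ℂ) :
    ∑ k ∈ Finset.range (p.natDegree + 1),
      ((1 / (k.factorial : ℂ)) * ((k : ℂ) * (-τ / 2) ^ (k - 1) * (-1 / 2))) *
        (Polynomial.derivative^[2 * k] p).eval z
    = -(1/2) *
        (Polynomial.derivative (Polynomial.derivative (polyHeatFlow p τ))).eval z := by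
  rw [heat_deriv2, Polynomial.eval_finset_sum]
  rw [Finset.mul_sum, hdeg]
  rw [Finset.sum_range_succ' _ N]
  rw [Finset.sum_range_succ
    (fun k => -(1/2) * ((Polynomial.C ((1 / (k.factorial : ℂ)) * (-τ / 2) ^ k) *
      (Polynomial.derivative^[2 * k + 2] p)).eval z)) N]
  have hzero : Polynomial.derivative^[2 * N + 2] p = 0 :=
    Polynomial.iterate_derivative_eq_zero (by omega)
  rw [hzero]
  simp only [Polynomial.eval_mul, Polynomial.eval_C, Polynomial.eval_zero, mul_zero, add_zero,
    Nat.cast_zero, zero_mul, mul_zero, zero_mul, add_zero]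
  apply Finset.sum_congr rfl
  intro k _
  have h2 : 2 * (k + 1) = 2 * k + 2 := by ring
  rw [h2]
  have hfac : ((k+1).factorial : ℂ) = (k+1) * (k.factorial : ℂ) := by
    rw [Nat.factorial_succ]; push_cast; ring
  have hfk : (k.factorial : ℂ) ≠ 0 := Nat.cast_ne_zero.2 (Nat.factorial_ne_zero k)
  have hk1 : ((k:ℂ)+1) ≠ 0 := Nat.cast_add_one_ne_zero k
  simp only [Nat.add_sub_cancel, hfac]
  push_cast
  field_simp

lemma derivative_finset_prod {ι : Type*} [DecidableEq ι] (s : Finset ι) (f : ι → Polynomial ℂ) :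
    Polynomial.derivative (∏ i ∈ s, f i)
      = ∑ i ∈ s, (∏ j ∈ s.erase i, f j) * Polynomial.derivative (f i) := by
  rw [Finset.prod_eq_multiset_prod, Polynomial.derivative_prod, Finset.sum_eq_multiset_sum]
  congr 1


lemma eval_deriv_prod {n : ℕ} (c : ℂ) (a : Fin n → ℂ) (j : Fin n) :
    (Polynomial.derivative (Polynomial.C c * ∏ k, (Polynomial.X - Polynomial.C (a k)))).eval (a j)
      = c * ∏ k ∈ Finset.univ.erase j, (a j - a k) := by
  rw [Polynomial.derivative_C_mul, derivative_finset_prod _ _]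
  simp only [Polynomial.derivative_sub, Polynomial.derivative_X, Polynomial.derivative_C,
    sub_zero, mul_one]
  rw [Polynomial.eval_mul, Polynomial.eval_C, Polynomial.eval_finset_sum]
  congr 1
  rw [Finset.sum_eq_single j]
  · simp [Polynomial.eval_prod]
  · intro b _ hbj
    rw [Polynomial.eval_prod]
    apply Finset.prod_eq_zero (Finset.mem_erase.2 ⟨Ne.symm hbj, Finset.mem_univ j⟩)
    simp
  · simp

lemma eval_deriv2_prod {n : ℕ} (c : ℂ) (a : Fin n → ℂ) (j : Fin n) :
    (Polynomial.derivative (Polynomial.derivative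
        (Polynomial.C c * ∏ k, (Polynomial.X - Polynomial.C (a k))))).eval (a j)
      = c * (2 * ∑ k ∈ Finset.univ.erase j,
          ∏ m ∈ (Finset.univ.erase j).erase k, (a j - a m)) := by
  rw [Polynomial.derivative_C_mul, derivative_finset_prod _ _]
  simp only [Polynomial.derivative_sub, Polynomial.derivative_X, Polynomial.derivative_C,
    sub_zero, mul_one]
  rw [Polynomial.derivative_C_mul, map_sum]
  rw [Polynomial.eval_mul, Polynomial.eval_C, Polynomial.eval_finset_sum]
  congr 1
  have key : ∀ k : Fin n, (Polynomial.derivative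
      (∏ l ∈ Finset.univ.erase k, (Polynomial.X - Polynomial.C (a l)))).eval (a j)
      = ∑ l ∈ Finset.univ.erase k,
          ∏ m ∈ (Finset.univ.erase k).erase l, (a j - a m) := by
    intro k
    rw [derivative_finset_prod _ _]
    simp only [Polynomial.derivative_sub, Polynomial.derivative_X, Polynomial.derivative_C,
      sub_zero, mul_one]
    rw [Polynomial.eval_finset_sum]
    apply Finset.sum_congr rfl
    intro l _
    rw [Polynomial.eval_prod]
    simp
  calc ∑ k, (Polynomial.derivative
        (∏ l ∈ Finset.univ.erase k, (Polynomial.X - Polynomial.C (a l)))).eval (a j)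
      = ∑ k, ∑ l ∈ Finset.univ.erase k,
          ∏ m ∈ (Finset.univ.erase k).erase l, (a j - a m) := by
        exact Finset.sum_congr rfl fun k _ => key k
    _ = 2 * ∑ k ∈ Finset.univ.erase j,
          ∏ m ∈ (Finset.univ.erase j).erase k, (a j - a m) := by
        rw [← Finset.add_sum_erase _ _ (Finset.mem_univ j)]
        have h2 : ∑ k ∈ Finset.univ.erase j, ∑ l ∈ Finset.univ.erase k,
              ∏ m ∈ (Finset.univ.erase k).erase l, (a j - a m)
            = ∑ k ∈ Finset.univ.erase j,
              ∏ m ∈ (Finset.univ.erase j).erase k, (a j - a m) := by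
          apply Finset.sum_congr rfl
          intro k hk
          have hkj : k ≠ j := (Finset.mem_erase.1 hk).1
          rw [Finset.sum_eq_single j]
          · rw [Finset.erase_right_comm]
          · intro l hl hlj
            have hlk : l ≠ k := (Finset.mem_erase.1 hl).1
            apply Finset.prod_eq_zero
              (Finset.mem_erase.2 ⟨Ne.symm hlj, Finset.mem_erase.2 ⟨Ne.symm hkj, Finset.mem_univ j⟩⟩)
            · simp
          · intro hj
            exact absurd (Finset.mem_erase.2 ⟨Ne.symm hkj, Finset.mem_univ j⟩) hj
        rw [h2]
        ring

lemma cm_identity {n : ℕ} (a : Fin n → ℂ) (ha : Function.Injective a) (j : Fin n) :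
    ∑ k ∈ Finset.univ.erase j,
      ((∑ l ∈ Finset.univ.erase j, (a j - a l)⁻¹) -
        (∑ l ∈ Finset.univ.erase k, (a k - a l)⁻¹)) * ((a j - a k) ^ 2)⁻¹
    = 2 * ∑ k ∈ Finset.univ.erase j, ((a j - a k) ^ 3)⁻¹ := by
  have hne : ∀ {u v : Fin n}, u ≠ v → a u - a v ≠ 0 := by
    intro u v huv
    exact sub_ne_zero.2 fun h => huv (ha h)
  have split : ∀ k ∈ Finset.univ.erase j,
      ((∑ l ∈ Finset.univ.erase j, (a j - a l)⁻¹) -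
        (∑ l ∈ Finset.univ.erase k, (a k - a l)⁻¹)) * ((a j - a k) ^ 2)⁻¹
      = 2 * ((a j - a k) ^ 3)⁻¹ +
        ∑ m ∈ (Finset.univ.erase j).erase k,
          ((a j - a m)⁻¹ - (a k - a m)⁻¹) * ((a j - a k) ^ 2)⁻¹ := by
    intro k hk
    have hkj : k ≠ j := (Finset.mem_erase.1 hk).1
    have hjk : (j : Fin n) ∈ Finset.univ.erase k :=
      Finset.mem_erase.2 ⟨Ne.symm hkj, Finset.mem_univ j⟩
    rw [← Finset.add_sum_erase _ _ hk, ← Finset.add_sum_erase _ _ hjk,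
      Finset.erase_right_comm]
    have hB : (a k - a j)⁻¹ = -(a j - a k)⁻¹ := by
      rw [← inv_neg, neg_sub]
    have hcube : (a j - a k)⁻¹ * ((a j - a k) ^ 2)⁻¹ = ((a j - a k) ^ 3)⁻¹ := by
      rw [← mul_inv]
      congr 1
      ring
    rw [hB]
    simp only [sub_mul, Finset.sum_sub_distrib]
    rw [← Finset.sum_mul, ← Finset.sum_mul, ← hcube]
    ring
  rw [Finset.sum_congr rfl split, Finset.sum_add_distrib, ← Finset.mul_sum]
  have hzero : ∑ k ∈ Finset.univ.erase j, ∑ m ∈ (Finset.univ.erase j).erase k,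
      ((a j - a m)⁻¹ - (a k - a m)⁻¹) * ((a j - a k) ^ 2)⁻¹ = 0 := by
    set s := Finset.univ.erase j with hs
    have hconv : ∀ k ∈ s, ∑ m ∈ s.erase k,
        ((a j - a m)⁻¹ - (a k - a m)⁻¹) * ((a j - a k) ^ 2)⁻¹
        = ∑ m ∈ s, if m ≠ k then ((a j - a m)⁻¹ - (a k - a m)⁻¹) * ((a j - a k) ^ 2)⁻¹
            else 0 := by
      intro k hk
      rw [← Finset.sum_filter, Finset.filter_ne']
    rw [Finset.sum_congr rfl hconv, ← Finset.sum_product']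
    set T := fun (q : Fin n × Fin n) =>
      if q.2 ≠ q.1 then ((a j - a q.2)⁻¹ - (a q.1 - a q.2)⁻¹) * ((a j - a q.1) ^ 2)⁻¹ else 0
      with hT
    apply Finset.sum_involution (fun q _ => (q.2, q.1))
    · intro q hq
      simp only [Finset.mem_product] at hq
      by_cases hd : q.2 = q.1
      · simp [hT, hd]
      · have h1 : q.1 ≠ j := (Finset.mem_erase.1 hq.1).1
        have h2 : q.2 ≠ j := (Finset.mem_erase.1 hq.2).1
        have hjq1 : a j - a q.1 ≠ 0 := hne (Ne.symm h1)
        have hjq2 : a j - a q.2 ≠ 0 := hne (Ne.symm h2)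
        have h12 : a q.1 - a q.2 ≠ 0 := hne (Ne.symm hd)
        have h21 : a q.2 - a q.1 ≠ 0 := hne hd
        simp only [hT, if_neg (not_not.2 rfl), hd, Ne.symm hd, ite_true, if_pos]
        rw [if_pos hd, if_pos (fun h => hd (Eq.symm h))]
        field_simp
        ring
    · intro q hq h
      intro hcon
      have : q.1 = q.2 := congrArg Prod.snd hcon
      rw [if_neg (fun hh => hh (Eq.symm this))] at h
      exact h rfl
    · intro q hq
      simp only [Finset.mem_product] at hq ⊢
      exact ⟨hq.2, hq.1⟩
    · intro q hq
      rfl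
  rw [hzero, add_zero]

/-- τ-partial derivative of `(τ,z) ↦ (polyHeatFlow p τ).eval z`. -/
def heatA (p : Polynomial ℂ) (x : ℂ × ℂ) : ℂ :=
  ∑ k ∈ Finset.range (p.natDegree + 1),
    ((1 / (k.factorial : ℂ)) * ((k : ℂ) * (-x.1 / 2) ^ (k - 1) * (-1 / 2))) *
      (Polynomial.derivative^[2 * k] p).eval x.2

/-- z-partial derivative. -/
def heatB (p : Polynomial ℂ) (x : ℂ × ℂ) : ℂ :=
  (Polynomial.derivative (polyHeatFlow p x.1)).eval x.2

lemma heat_hasStrictFDerivAt (p : Polynomial ℂ) (x : ℂ × ℂ) :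
    HasStrictFDerivAt (fun y : ℂ × ℂ => (polyHeatFlow p y.1).eval y.2)
      (heatA p x • ContinuousLinearMap.fst ℂ ℂ ℂ +
        heatB p x • ContinuousLinearMap.snd ℂ ℂ ℂ) x := by
  have hQeq : (fun y : ℂ × ℂ => (polyHeatFlow p y.1).eval y.2) =
      fun y : ℂ × ℂ => ∑ k ∈ Finset.range (p.natDegree + 1),
        ((1 / (k.factorial : ℂ)) * (-y.1 / 2) ^ k) *
          (Polynomial.derivative^[2 * k] p).eval y.2 := by
    funext y
    rw [polyHeatFlow, Polynomial.eval_finset_sum]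
    exact Finset.sum_congr rfl fun k _ => by rw [Polynomial.eval_mul, Polynomial.eval_C]
  rw [hQeq]
  have hterm : ∀ k ∈ Finset.range (p.natDegree + 1),
      HasStrictFDerivAt (fun y : ℂ × ℂ =>
          ((1 / (k.factorial : ℂ)) * (-y.1 / 2) ^ k) *
            (Polynomial.derivative^[2 * k] p).eval y.2)
        ((((1 / (k.factorial : ℂ)) * (-x.1 / 2) ^ k) •
            (((Polynomial.derivative (Polynomial.derivative^[2 * k] p)).eval x.2) •
              ContinuousLinearMap.snd ℂ ℂ ℂ)) +
          (((Polynomial.derivative^[2 * k] p).eval x.2) •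
            (((1 / (k.factorial : ℂ)) * ((k : ℂ) * (-x.1 / 2) ^ (k - 1) * (-1 / 2))) •
              ContinuousLinearMap.fst ℂ ℂ ℂ))) x := by
    intro k _
    have hu : HasStrictDerivAt (fun t : ℂ => -t / 2) (-1 / 2) x.1 := by
      simpa using ((hasStrictDerivAt_id x.1).neg.div_const 2)
    have hpow : HasStrictDerivAt (fun t : ℂ => (-t / 2) ^ k)
        ((k : ℂ) * (-x.1 / 2) ^ (k - 1) * (-1 / 2)) x.1 :=
      (hasStrictDerivAt_pow k (-x.1 / 2)).comp x.1 hu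
    have hc : HasStrictDerivAt (fun t : ℂ => (1 / (k.factorial : ℂ)) * (-t / 2) ^ k)
        ((1 / (k.factorial : ℂ)) * ((k : ℂ) * (-x.1 / 2) ^ (k - 1) * (-1 / 2))) x.1 :=
      hpow.const_mul _
    have he : HasStrictDerivAt (fun z : ℂ => (Polynomial.derivative^[2 * k] p).eval z)
        ((Polynomial.derivative (Polynomial.derivative^[2 * k] p)).eval x.2) x.2 :=
      (Polynomial.derivative^[2 * k] p).hasStrictDerivAt x.2
    have hcF : HasStrictFDerivAt
        (fun y : ℂ × ℂ => (1 / (k.factorial : ℂ)) * (-y.1 / 2) ^ k)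
        ((((1 / (k.factorial : ℂ)) * ((k : ℂ) * (-x.1 / 2) ^ (k - 1) * (-1 / 2))) •
          ContinuousLinearMap.fst ℂ ℂ ℂ)) x := by
      have := hc.hasStrictFDerivAt.comp x (hasStrictFDerivAt_fst (p := x) (E := ℂ) (F := ℂ))
      refine this.congr_fderiv (Eq.symm ?_)
      apply ContinuousLinearMap.ext
      intro v
      simp [mul_comm]
    have heF : HasStrictFDerivAt
        (fun y : ℂ × ℂ => (Polynomial.derivative^[2 * k] p).eval y.2)
        ((((Polynomial.derivative (Polynomial.derivative^[2 * k] p)).eval x.2) •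
          ContinuousLinearMap.snd ℂ ℂ ℂ)) x := by
      have := he.hasStrictFDerivAt.comp x (hasStrictFDerivAt_snd (p := x) (E := ℂ) (F := ℂ))
      refine this.congr_fderiv (Eq.symm ?_)
      apply ContinuousLinearMap.ext
      intro v
      simp [mul_comm]
    exact hcF.mul heF
  have hsum := HasStrictFDerivAt.fun_sum hterm
  refine hsum.congr_fderiv (Eq.symm ?_)
  apply ContinuousLinearMap.ext
  intro v
  simp only [ContinuousLinearMap.sum_apply, ContinuousLinearMap.add_apply,
    ContinuousLinearMap.smul_apply, ContinuousLinearMap.coe_fst',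
    ContinuousLinearMap.coe_snd', smul_eq_mul, heatA, heatB, polyHeatFlow,
    Polynomial.eval_finset_sum, map_sum, Polynomial.derivative_C_mul,
    Polynomial.eval_mul, Polynomial.eval_C, Finset.sum_mul, Finset.sum_add_distrib]
  rw [add_comm]
  congr 1
  · apply Finset.sum_congr rfl
    intro k _
    ring
  · apply Finset.sum_congr rfl
    intro k _
    ring

lemma heat_track (p : Polynomial ℂ) (t w : ℂ)
    (hroot : (polyHeatFlow p t).eval w = 0)
    (hB : heatB p (t, w) ≠ 0) :
    ∃ g : ℂ → ℂ, g t = w ∧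
      HasDerivAt g (-(heatA p (t, w)) / heatB p (t, w)) t ∧
      (∀ᶠ τ in 𝓝 t, ContinuousAt g τ) ∧
      (∀ᶠ τ in 𝓝 t, (polyHeatFlow p τ).eval (g τ) = 0) ∧
      ∃ U : Set (ℂ × ℂ), IsOpen U ∧ (∀ᶠ τ in 𝓝 t, (τ, g τ) ∈ U) ∧
        ∀ x ∈ U, (polyHeatFlow p x.1).eval x.2 = 0 → x.2 = g x.1 := by
  set A := heatA p (t, w) with hA
  set B := heatB p (t, w) with hBdef
  set L : ℂ × ℂ →L[ℂ] ℂ :=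
    A • ContinuousLinearMap.fst ℂ ℂ ℂ + B • ContinuousLinearMap.snd ℂ ℂ ℂ with hL
  set f : ℂ × ℂ →L[ℂ] ℂ × ℂ := (ContinuousLinearMap.fst ℂ ℂ ℂ).prod L with hf
  set finv : ℂ × ℂ →L[ℂ] ℂ × ℂ :=
    (ContinuousLinearMap.fst ℂ ℂ ℂ).prod
      (B⁻¹ • (ContinuousLinearMap.snd ℂ ℂ ℂ - A • ContinuousLinearMap.fst ℂ ℂ ℂ)) with hfinv
  have hinv1 : ∀ v : ℂ × ℂ, finv (f v) = v := by
    intro v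
    simp only [hfinv, hf, hL, ContinuousLinearMap.prod_apply, ContinuousLinearMap.add_apply,
      ContinuousLinearMap.smul_apply, ContinuousLinearMap.sub_apply,
      ContinuousLinearMap.coe_fst', ContinuousLinearMap.coe_snd', smul_eq_mul]
    refine Prod.ext rfl ?_
    field_simp; ring
  have hinv2 : ∀ v : ℂ × ℂ, f (finv v) = v := by
    intro v
    simp only [hfinv, hf, hL, ContinuousLinearMap.prod_apply, ContinuousLinearMap.add_apply,
      ContinuousLinearMap.smul_apply, ContinuousLinearMap.sub_apply,
      ContinuousLinearMap.coe_fst', ContinuousLinearMap.coe_snd', smul_eq_mul]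
    refine Prod.ext rfl ?_
    field_simp; ring
  set E : (ℂ × ℂ) ≃L[ℂ] (ℂ × ℂ) := ContinuousLinearEquiv.equivOfInverse f finv hinv1 hinv2
    with hE
  set G : ℂ × ℂ → ℂ × ℂ := fun x => (x.1, (polyHeatFlow p x.1).eval x.2) with hGdef
  have hG : HasStrictFDerivAt G (E : (ℂ × ℂ) →L[ℂ] (ℂ × ℂ)) (t, w) := by
    have hEc : (E : (ℂ × ℂ) →L[ℂ] (ℂ × ℂ)) = f := rfl
    rw [hEc, hf]
    exact HasStrictFDerivAt.prodMk hasStrictFDerivAt_fst (heat_hasStrictFDerivAt p (t, w))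
  set e := hG.toOpenPartialHomeomorph G with he
  have hGe : ⇑e = G := hG.toOpenPartialHomeomorph_coe
  have hGtw : G (t, w) = (t, 0) := by simp [hGdef, hroot]
  have hsrc : (t, w) ∈ e.source := hG.mem_toOpenPartialHomeomorph_source
  have htar0 : ((t : ℂ), (0 : ℂ)) ∈ e.target := by
    have := hG.image_mem_toOpenPartialHomeomorph_target
    rwa [hGtw] at this
  set g : ℂ → ℂ := fun τ => (e.symm (τ, 0)).2 with hg
  have hmem : ∀ τ : ℂ, (τ, (0 : ℂ)) ∈ e.target →
      (polyHeatFlow p τ).eval (g τ) = 0 ∧ (τ, g τ) = e.symm (τ, 0) := by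
    intro τ hτ
    have h1 : e (e.symm (τ, 0)) = (τ, 0) := e.right_inv hτ
    rw [hGe] at h1
    have hfst : (e.symm (τ, 0)).1 = τ := congrArg Prod.fst h1
    have hsnd : (polyHeatFlow p (e.symm (τ, 0)).1).eval ((e.symm (τ, 0)).2) = 0 :=
      congrArg Prod.snd h1
    rw [hfst] at hsnd
    exact ⟨hsnd, Prod.ext hfst.symm rfl⟩
  have hev_tar : ∀ᶠ τ in 𝓝 t, (τ, (0 : ℂ)) ∈ e.target := by
    have hcont : ContinuousAt (fun τ : ℂ => ((τ, (0 : ℂ)) : ℂ × ℂ)) t :=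
      (continuous_id.prodMk continuous_const).continuousAt
    exact hcont.preimage_mem_nhds (e.open_target.mem_nhds htar0)
  have hgt : g t = w := by
    have h1 : e.symm (e (t, w)) = (t, w) := e.left_inv hsrc
    rw [hGe, hGtw] at h1
    show (e.symm (t, 0)).2 = w
    rw [h1]
  refine ⟨g, hgt, ?_, ?_, ?_, e.source, e.open_source, ?_, ?_⟩
  · -- HasDerivAt
    have hloc := hG.to_localInverse
    rw [HasStrictFDerivAt.localInverse_def, hGtw] at hloc
    have h1 : HasFDerivAt (fun τ : ℂ => ((τ, (0 : ℂ)) : ℂ × ℂ))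
        (ContinuousLinearMap.inl ℂ ℂ ℂ) t := (ContinuousLinearMap.inl ℂ ℂ ℂ).hasFDerivAt
    have h3 := (hloc.hasFDerivAt.comp t h1)
    have h4 := ((ContinuousLinearMap.snd ℂ ℂ ℂ).hasFDerivAt).comp t h3
    have h5 := h4.hasDerivAt
    have hval : ((E.symm : (ℂ × ℂ) →L[ℂ] (ℂ × ℂ)) (1, 0)).2 = -A / B := by
      have hEs : (E.symm : (ℂ × ℂ) →L[ℂ] (ℂ × ℂ)) = finv := rfl
      rw [hEs, hfinv]
      simp only [ContinuousLinearMap.prod_apply, ContinuousLinearMap.smul_apply,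
        ContinuousLinearMap.sub_apply, ContinuousLinearMap.coe_fst',
        ContinuousLinearMap.coe_snd', smul_eq_mul]
      ring
    simp only [ContinuousLinearMap.coe_comp', Function.comp_apply,
      ContinuousLinearMap.inl_apply, ContinuousLinearMap.coe_snd'] at h5
    rw [hval] at h5
    exact h5
  · -- eventual continuity
    filter_upwards [hev_tar] with τ hτ
    have hsymm : ContinuousAt e.symm (τ, (0 : ℂ)) :=
      e.symm.continuousAt (by rwa [OpenPartialHomeomorph.symm_source])
    have hp : ContinuousAt (fun τ : ℂ => ((τ, (0 : ℂ)) : ℂ × ℂ)) τ :=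
      (continuous_id.prodMk continuous_const).continuousAt
    exact (continuous_snd.continuousAt).comp (ContinuousAt.comp (x := τ) hsymm hp)
  · -- eventual root
    filter_upwards [hev_tar] with τ hτ
    exact (hmem τ hτ).1
  · -- eventually in source
    filter_upwards [hev_tar] with τ hτ
    rw [(hmem τ hτ).2]
    exact e.map_target hτ
  · -- uniqueness
    intro x hx hx0
    have h1 : e.symm (e x) = x := e.left_inv hx
    rw [hGe] at h1
    have h2 : G x = (x.1, 0) := by simp [hGdef, hx0]
    rw [h2] at h1
    show x.2 = (e.symm (x.1, 0)).2
    rw [h1]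

lemma roots_eq_map {N : ℕ} (q : Polynomial ℂ) (hq : q ≠ 0) (hdeg : q.natDegree = N)
    (v : Fin N → ℂ) (hv : Function.Injective v) (hr : ∀ j, q.IsRoot (v j)) :
    q.roots = Multiset.map v Finset.univ.val := by
  set M := Multiset.map v Finset.univ.val with hM
  have hnodup : M.Nodup := Multiset.Nodup.map hv Finset.univ.nodup
  have hsub : M ⊆ q.roots := by
    intro a ha
    rw [hM, Multiset.mem_map] at ha
    obtain ⟨j, _, rfl⟩ := ha
    exact Polynomial.mem_roots'.2 ⟨hq, hr j⟩
  have hle : M ≤ q.roots := (Multiset.le_iff_subset hnodup).2 hsub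
  have hcardM : Multiset.card M = N := by
    rw [hM, Multiset.card_map]
    simp
  have hcard : Multiset.card q.roots ≤ Multiset.card M := by
    rw [hcardM, ← hdeg]
    exact q.card_roots'
  exact (Multiset.eq_of_le_of_card_le hle hcard).symm

lemma factor_of_roots {N : ℕ} (q : Polynomial ℂ) (hq : q ≠ 0) (hdeg : q.natDegree = N)
    (v : Fin N → ℂ) (hv : Function.Injective v) (hr : ∀ j, q.IsRoot (v j)) :
    q = Polynomial.C q.leadingCoeff * ∏ k, (Polynomial.X - Polynomial.C (v k)) := by
  have hroots := roots_eq_map q hq hdeg v hv hr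
  have hcard : Multiset.card q.roots = q.natDegree := by
    rw [hroots, Multiset.card_map, hdeg]
    simp
  have := Polynomial.C_leadingCoeff_mul_prod_multiset_X_sub_C hcard
  conv_lhs => rw [← this]
  rw [hroots, Multiset.map_map]
  congr 1

lemma deriv_value (p : Polynomial ℂ) (N : ℕ) (hN : 1 ≤ N) (hdeg : p.natDegree = N)
    (hlc : p.leadingCoeff ≠ 0) (τ : ℂ) (v : Fin N → ℂ) (hv : Function.Injective v)
    (hfac : polyHeatFlow p τ =
      Polynomial.C p.leadingCoeff * ∏ k, (Polynomial.X - Polynomial.C (v k))) (j : Fin N) :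
    -(heatA p (τ, v j)) / heatB p (τ, v j) = ∑ k ∈ Finset.univ.erase j, (v j - v k)⁻¹ := by
  have hA : heatA p (τ, v j) = -(1/2) *
      (Polynomial.derivative (Polynomial.derivative (polyHeatFlow p τ))).eval (v j) := by
    simp only [heatA]
    exact heat_tau_deriv_eq p N hN hdeg τ (v j)
  have hAv : heatA p (τ, v j)
      = -(1/2) * (p.leadingCoeff * (2 * ∑ k ∈ Finset.univ.erase j,
          ∏ m ∈ (Finset.univ.erase j).erase k, (v j - v m))) := by
    rw [hA, hfac, eval_deriv2_prod]
  have hBv : heatB p (τ, v j)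
      = p.leadingCoeff * ∏ k ∈ Finset.univ.erase j, (v j - v k) := by
    simp only [heatB]
    rw [hfac, eval_deriv_prod]
  have hne : ∀ k ∈ Finset.univ.erase j, v j - v k ≠ 0 := by
    intro k hk
    exact sub_ne_zero.2 fun h => (Finset.mem_erase.1 hk).1 (hv h).symm
  calc -(heatA p (τ, v j)) / heatB p (τ, v j)
      = (p.leadingCoeff * ∑ k ∈ Finset.univ.erase j,
          ∏ m ∈ (Finset.univ.erase j).erase k, (v j - v m)) /
        (p.leadingCoeff * ∏ k ∈ Finset.univ.erase j, (v j - v k)) := by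
        rw [hAv, hBv]
        ring_nf
    _ = (∑ k ∈ Finset.univ.erase j,
          ∏ m ∈ (Finset.univ.erase j).erase k, (v j - v m)) /
        (∏ k ∈ Finset.univ.erase j, (v j - v k)) := mul_div_mul_left _ _ hlc
    _ = ∑ k ∈ Finset.univ.erase j, (v j - v k)⁻¹ := by
        rw [Finset.sum_div]
        apply Finset.sum_congr rfl
        intro k hk
        have hsplit : ∏ m ∈ Finset.univ.erase j, (v j - v m)
            = (v j - v k) * ∏ m ∈ (Finset.univ.erase j).erase k, (v j - v m) :=
          (Finset.mul_prod_erase _ _ hk).symm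
        have ha : ∏ m ∈ (Finset.univ.erase j).erase k, (v j - v m) ≠ 0 :=
          Finset.prod_ne_zero_iff.2 fun m hm => hne m (Finset.mem_of_mem_erase hm)
        rw [hsplit, mul_comm, ← div_div, div_self ha, one_div]

/-- if `e^{-σ₀D²/2}p` has `N = deg p` distinct roots, then locally in `τ` the roots
can be followed holomorphically, satisfy `z_j' = ∑_{k≠j} 1/(z_j - z_k)`, and consequently the
rational Calogero--Moser equations `z_j'' = -2 ∑_{k≠j} 1/(z_j - z_k)³`. -/
theorem poly_heat_flow_roots_ode (p : Polynomial ℂ) (N : ℕ) (hN : 1 ≤ N)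
    (hdeg : p.natDegree = N) (σ₀ : ℂ)
    (hsimple : (polyHeatFlow p σ₀).roots.Nodup)
    (hcard : Multiset.card (polyHeatFlow p σ₀).roots = N) :
    ∃ r > (0 : ℝ), ∃ z : Fin N → ℂ → ℂ,
      (∀ j, DifferentiableOn ℂ (z j) (Metric.ball σ₀ r)) ∧
      ∀ τ ∈ Metric.ball σ₀ r,
        (∀ j k : Fin N, j ≠ k → z j τ ≠ z k τ) ∧
        (∀ w : ℂ, (polyHeatFlow p τ).IsRoot w ↔ ∃ j, z j τ = w) ∧
        (∀ j, deriv (z j) τ = ∑ k ∈ Finset.univ.erase j, (z j τ - z k τ)⁻¹) ∧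
        (∀ j, deriv (deriv (z j)) τ = -2 * ∑ k ∈ Finset.univ.erase j, ((z j τ - z k τ) ^ 3)⁻¹) := by
  classical
  have hdegN : 1 ≤ p.natDegree := by omega
  have hp0 : p ≠ 0 := fun h => by rw [h, Polynomial.natDegree_zero] at hdeg; omega
  have hlc : p.leadingCoeff ≠ 0 := Polynomial.leadingCoeff_ne_zero.2 hp0
  -- enumeration of the roots at σ₀
  set l := (polyHeatFlow p σ₀).roots.toList with hl
  have hlen : l.length = N := by rw [hl, Multiset.length_toList, hcard]
  have hlnodup : l.Nodup := by
    have hcoe : (↑l : Multiset ℂ) = (polyHeatFlow p σ₀).roots := Multiset.coe_toList _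
    rw [← hcoe] at hsimple
    exact (Multiset.coe_nodup).1 hsimple
  set w : Fin N → ℂ := fun j => l.get (Fin.cast hlen.symm j) with hw
  have hwinj : Function.Injective w := by
    intro a b hab
    have h2 := (List.nodup_iff_injective_get).1 hlnodup hab
    have := congrArg Fin.val h2
    exact Fin.ext this
  have hwroot : ∀ j, (polyHeatFlow p σ₀).IsRoot (w j) := by
    intro j
    apply Polynomial.isRoot_of_mem_roots
    have : w j ∈ l := List.get_mem l _
    rwa [← Multiset.mem_coe, Multiset.coe_toList] at this
  -- heatB nonvanishing helper
  have hBne : ∀ (τ : ℂ) (v : Fin N → ℂ), Function.Injective v →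
      (polyHeatFlow p τ = Polynomial.C p.leadingCoeff *
        ∏ k, (Polynomial.X - Polynomial.C (v k))) →
      ∀ j, heatB p (τ, v j) ≠ 0 := by
    intro τ v hv hfac j
    have : heatB p (τ, v j) = p.leadingCoeff * ∏ k ∈ Finset.univ.erase j, (v j - v k) := by
      simp only [heatB]
      rw [hfac, eval_deriv_prod]
    rw [this]
    refine mul_ne_zero hlc (Finset.prod_ne_zero_iff.2 fun k hk => ?_)
    exact sub_ne_zero.2 fun h => (Finset.mem_erase.1 hk).1 (hv h).symm
  have hfacgen : ∀ (τ : ℂ) (v : Fin N → ℂ), Function.Injective v →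
      (∀ j, (polyHeatFlow p τ).eval (v j) = 0) →
      polyHeatFlow p τ = Polynomial.C p.leadingCoeff *
        ∏ k, (Polynomial.X - Polynomial.C (v k)) := by
    intro τ v hv hr
    have := factor_of_roots (polyHeatFlow p τ) (heat_ne_zero p hdegN τ)
      (by rw [heat_natDegree p hdegN, hdeg]) v hv hr
    rwa [heat_leadingCoeff p hdegN τ] at this
  have hfac0 := hfacgen σ₀ w hwinj hwroot
  have hB0 := hBne σ₀ w hwinj hfac0
  choose g hg0 hgderiv hgcont hgroot U hUopen hUev hUuniq using
    fun j => heat_track p σ₀ (w j) (hwroot j) (hB0 j)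
  -- combined eventual statements near σ₀
  have hball : ∀ᶠ τ in 𝓝 σ₀, (∀ j, ContinuousAt (g j) τ) ∧
      (∀ j, (polyHeatFlow p τ).eval (g j τ) = 0) ∧
      (∀ j k, j ≠ k → g j τ ≠ g k τ) := by
    refine Filter.Eventually.and ?_ (Filter.Eventually.and ?_ ?_)
    · exact Filter.eventually_all.2 fun j => hgcont j
    · exact Filter.eventually_all.2 fun j => hgroot j
    · refine Filter.eventually_all.2 fun j => Filter.eventually_all.2 fun k => ?_
      by_cases hjk : j = k
      · exact Filter.Eventually.of_forall fun τ h => absurd hjk h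
      · have hcj : ContinuousAt (g j) σ₀ := (hgcont j).self_of_nhds
        have hck : ContinuousAt (g k) σ₀ := (hgcont k).self_of_nhds
        have hne0 : g j σ₀ - g k σ₀ ≠ 0 := by
          rw [hg0 j, hg0 k]
          exact sub_ne_zero.2 fun h => hjk (hwinj h)
        filter_upwards [(hcj.sub hck).eventually_ne hne0] with τ hτ
        exact fun _ => sub_ne_zero.1 hτ
  obtain ⟨r, hr, hrball⟩ := Metric.eventually_nhds_iff_ball.1 hball
  have hcontOn : ∀ τ ∈ Metric.ball σ₀ r, ∀ j, ContinuousAt (g j) τ :=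
    fun τ hτ => (hrball τ hτ).1
  have hrootOn : ∀ τ ∈ Metric.ball σ₀ r, ∀ j, (polyHeatFlow p τ).eval (g j τ) = 0 :=
    fun τ hτ => (hrball τ hτ).2.1
  have hsepOn : ∀ τ ∈ Metric.ball σ₀ r, ∀ j k, j ≠ k → g j τ ≠ g k τ :=
    fun τ hτ => (hrball τ hτ).2.2
  have hinjτ : ∀ τ ∈ Metric.ball σ₀ r, Function.Injective (fun m => g m τ) := by
    intro τ hτ a b hab
    by_contra hne
    exact hsepOn τ hτ a b hne hab
  have hfacτ : ∀ τ ∈ Metric.ball σ₀ r, polyHeatFlow p τ =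
      Polynomial.C p.leadingCoeff * ∏ k, (Polynomial.X - Polynomial.C (g k τ)) :=
    fun τ hτ => hfacgen τ (fun m => g m τ) (hinjτ τ hτ) (hrootOn τ hτ)
  -- derivatives on the ball
  have hZD : ∀ τ ∈ Metric.ball σ₀ r, ∀ j,
      HasDerivAt (g j) (∑ k ∈ Finset.univ.erase j, (g j τ - g k τ)⁻¹) τ := by
    intro τ hτ j
    have hBτ : heatB p (τ, g j τ) ≠ 0 := hBne τ (fun m => g m τ) (hinjτ τ hτ) (hfacτ τ hτ) j
    obtain ⟨g', hg'0, hg'deriv, _, _, U', hU'open, hU'ev, hU'uniq⟩ :=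
      heat_track p τ (g j τ) (hrootOn τ hτ j) hBτ
    have hUmem : (τ, g j τ) ∈ U' := by
      have := hU'ev.self_of_nhds
      rwa [hg'0] at this
    have hevU : ∀ᶠ τ' in 𝓝 τ, (τ', g j τ') ∈ U' := by
      have hc : ContinuousAt (fun τ' => ((τ' : ℂ), g j τ')) τ :=
        (continuous_id.continuousAt).prodMk (hcontOn τ hτ j)
      exact hc.preimage_mem_nhds (hU'open.mem_nhds hUmem)
    have hevroot : ∀ᶠ τ' in 𝓝 τ, (polyHeatFlow p τ').eval (g j τ') = 0 := by
      filter_upwards [isOpen_ball.mem_nhds hτ] with τ' hτ'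
      exact hrootOn τ' hτ' j
    have heq : g j =ᶠ[𝓝 τ] g' := by
      filter_upwards [hevU, hevroot] with τ' h1 h2
      exact hU'uniq (τ', g j τ') h1 h2
    have hDer : HasDerivAt (g j) (-(heatA p (τ, g j τ)) / heatB p (τ, g j τ)) τ :=
      hg'deriv.congr_of_eventuallyEq heq
    rwa [deriv_value p N hN hdeg hlc τ (fun m => g m τ) (hinjτ τ hτ) (hfacτ τ hτ) j] at hDer
  refine ⟨r, hr, g, ?_, ?_⟩
  · intro j τ hτ
    exact (hZD τ hτ j).differentiableAt.differentiableWithinAt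
  · intro τ hτ
    refine ⟨hsepOn τ hτ, ?_, fun j => (hZD τ hτ j).deriv, ?_⟩
    · intro u
      constructor
      · intro hu
        have hmem : u ∈ (polyHeatFlow p τ).roots :=
          Polynomial.mem_roots'.2 ⟨heat_ne_zero p hdegN τ, hu⟩
        rw [roots_eq_map _ (heat_ne_zero p hdegN τ)
          (by rw [heat_natDegree p hdegN]; exact hdeg) _ (hinjτ τ hτ) (hrootOn τ hτ),
          Multiset.mem_map] at hmem
        obtain ⟨j, _, hj⟩ := hmem
        exact ⟨j, hj⟩
      · rintro ⟨j, rfl⟩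
        exact hrootOn τ hτ j
    · intro j
      have hds : deriv (g j) =ᶠ[𝓝 τ]
          fun τ' => ∑ k ∈ Finset.univ.erase j, (g j τ' - g k τ')⁻¹ := by
        filter_upwards [isOpen_ball.mem_nhds hτ] with τ' hτ'
        exact (hZD τ' hτ' j).deriv
      rw [Filter.EventuallyEq.deriv_eq hds]
      have hsumD : HasDerivAt
          (fun τ' => ∑ k ∈ Finset.univ.erase j, (g j τ' - g k τ')⁻¹)
          (∑ k ∈ Finset.univ.erase j,
            -((∑ l ∈ Finset.univ.erase j, (g j τ - g l τ)⁻¹) -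
               (∑ l ∈ Finset.univ.erase k, (g k τ - g l τ)⁻¹)) / (g j τ - g k τ) ^ 2) τ := by
        apply HasDerivAt.fun_sum
        intro k hk
        have h1 : HasDerivAt (fun τ' => g j τ' - g k τ')
            ((∑ l ∈ Finset.univ.erase j, (g j τ - g l τ)⁻¹) -
              (∑ l ∈ Finset.univ.erase k, (g k τ - g l τ)⁻¹)) τ :=
          (hZD τ hτ j).sub (hZD τ hτ k)
        have h2 : g j τ - g k τ ≠ 0 :=
          sub_ne_zero.2 (hsepOn τ hτ j k fun h => (Finset.mem_erase.1 hk).1 h.symm)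
        exact h1.inv h2
      rw [hsumD.deriv]
      have hcm := cm_identity (fun m => g m τ) (hinjτ τ hτ) j
      calc ∑ k ∈ Finset.univ.erase j,
            -((∑ l ∈ Finset.univ.erase j, (g j τ - g l τ)⁻¹) -
               (∑ l ∈ Finset.univ.erase k, (g k τ - g l τ)⁻¹)) / (g j τ - g k τ) ^ 2
          = -∑ k ∈ Finset.univ.erase j,
              ((∑ l ∈ Finset.univ.erase j, (g j τ - g l τ)⁻¹) -
               (∑ l ∈ Finset.univ.erase k, (g k τ - g l τ)⁻¹)) * ((g j τ - g k τ) ^ 2)⁻¹ := by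
            rw [← Finset.sum_neg_distrib]
            apply Finset.sum_congr rfl
            intro k _
            ring
        _ = -(2 * ∑ k ∈ Finset.univ.erase j, ((g j τ - g k τ) ^ 3)⁻¹) := by rw [hcm]
        _ = -2 * ∑ k ∈ Finset.univ.erase j, ((g j τ - g k τ) ^ 3)⁻¹ := by ring

end
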